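/- Let Z ⊂ ℝ^d be nonempty convex, ‖·‖ a norm on ℝ^d with dual norm ‖v‖_* := sup{⟨v, z⟩ : ‖z‖ ≤ 1}, and r : Z → ℝ a differentiable function whose Bregman divergence V_z(z') := r(z') − r(z) − ⟨∇r(z), z' − z⟩ satisfies V_z(z') ≥ ½‖z − z'‖² for all z, z' ∈ Z. Suppose moreover that ‖∇r(z) − ∇r(z')‖_* ≤ L_r‖z − z'‖ for all z, z' ∈ Z and that ‖z − z'‖ ≤ R for all z, z' ∈ Z, for some L_r, R > 0. Let g : Z → ℝ^d be monotone, α, β > 0, q ∈ Z, and suppose w_α, w_β ∈ Z satisfy, for all u ∈ Z: ⟨g(w_α), w_α − u⟩ ≤ α·[V_q(u) − V_{w_α}(u) − V_q(w_α)] and ⟨g(w_β), w_β − u⟩ ≤ β·[V_q(u) − V_{w_β}(u) − V_q(w_β)]. Then ‖w_α − w_β‖ ≤ (2 L_r R / max{α, β}) · |α − β|. -/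

import Mathlib

open RealInnerProductSpace

/-- Bregman divergence `V_z(z') = r(z') − r(z) − ⟨∇r(z), z' − z⟩` of a differentiable
function `r` with gradient map `gr`. -/
noncomputable def breg {d : ℕ} (r : EuclideanSpace ℝ (Fin d) → ℝ)
    (gr : EuclideanSpace ℝ (Fin d) → EuclideanSpace ℝ (Fin d))
    (z z' : EuclideanSpace ℝ (Fin d)) : ℝ :=
  r z' - r z - ⟪gr z, z' - z⟫

/-- The dual norm `‖v‖_* := sup{⟨v, z⟩ : N(z) ≤ 1}` of a norm `N` on `ℝ^d`. -/
noncomputable def dualNorm {d : ℕ} (N : EuclideanSpace ℝ (Fin d) → ℝ)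
    (v : EuclideanSpace ℝ (Fin d)) : ℝ :=
  sSup ((fun z => ⟪v, z⟫) '' {z | N z ≤ 1})

lemma pairing_le {d : ℕ} (N : EuclideanSpace ℝ (Fin d) → ℝ)
    (hNzero : ∀ x, N x = 0 ↔ x = 0)
    (hNsmul : ∀ (a : ℝ) (x : EuclideanSpace ℝ (Fin d)), N (a • x) = |a| * N x)
    (hNadd : ∀ x y, N (x + y) ≤ N x + N y)
    (v w : EuclideanSpace ℝ (Fin d)) (hw : w ≠ 0) :
    ⟪v, w⟫ ≤ dualNorm N v * N w := by
  have hN0 : N 0 = 0 := (hNzero 0).mpr rfl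
  have hNneg : ∀ x, N (-x) = N x := by
    intro x; have := hNsmul (-1) x; simpa using this
  have hNnonneg : ∀ x, 0 ≤ N x := by
    intro x
    have h := hNadd x (-x)
    rw [add_neg_cancel, hN0, hNneg] at h
    linarith
  -- upper Lipschitz bound
  set K : ℝ := ∑ i, N (EuclideanSpace.single i (1:ℝ)) with hK
  have hsum : ∀ (s : Finset (Fin d)) (f : Fin d → EuclideanSpace ℝ (Fin d)),
      N (∑ i ∈ s, f i) ≤ ∑ i ∈ s, N (f i) := by
    intro s f
    induction s using Finset.cons_induction with
    | empty => simp [hN0]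
    | cons a s ha ih =>
      rw [Finset.sum_cons, Finset.sum_cons]
      exact (hNadd _ _).trans (by linarith)
  have hupper : ∀ z, N z ≤ K * ‖z‖ := by
    intro z
    have hz : z = ∑ i, z i • EuclideanSpace.single i (1:ℝ) := by
      have h := (EuclideanSpace.basisFun (Fin d) ℝ).sum_repr z
      simp only [EuclideanSpace.basisFun_repr, EuclideanSpace.basisFun_apply] at h
      exact h.symm
    calc N z = N (∑ i, z i • EuclideanSpace.single i (1:ℝ)) := by rw [← hz]
      _ ≤ ∑ i, N (z i • EuclideanSpace.single i (1:ℝ)) := hsum _ _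
      _ = ∑ i, |z i| * N (EuclideanSpace.single i (1:ℝ)) := by simp [hNsmul]
      _ ≤ ∑ i, ‖z‖ * N (EuclideanSpace.single i (1:ℝ)) := by
          apply Finset.sum_le_sum
          intro i _
          apply mul_le_mul_of_nonneg_right _ (hNnonneg _)
          have h := abs_real_inner_le_norm (EuclideanSpace.single i (1:ℝ)) z
          simpa [EuclideanSpace.inner_single_left, EuclideanSpace.norm_single] using h
      _ = K * ‖z‖ := by rw [← Finset.mul_sum, mul_comm]
  -- continuity
  have hcont : Continuous N := by
    have hlip : LipschitzWith (Real.toNNReal K) N := by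
      apply LipschitzWith.of_dist_le_mul
      intro x y
      rw [Real.dist_eq, dist_eq_norm]
      have h1 : N x - N y ≤ N (x - y) := by
        have := hNadd (x - y) y; simp at this; linarith
      have h2 : N y - N x ≤ N (x - y) := by
        have := hNadd (y - x) x; simp at this
        have := hNneg (x - y); simp at this
        rw [← hNneg (x-y)] at *
        simp [neg_sub] at *
        linarith
      have h3 := hupper (x - y)
      have hK0 : 0 ≤ K := hK ▸ Finset.sum_nonneg fun i _ => hNnonneg _
      rw [Real.coe_toNNReal K (by positivity)]
      rw [abs_le]
      constructor <;> linarith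
    exact hlip.continuous
  -- lower bound via compactness
  have hwnorm : 0 < ‖w‖ := norm_pos_iff.mpr hw
  have hsph : (Metric.sphere (0:EuclideanSpace ℝ (Fin d)) 1).Nonempty :=
    ⟨‖w‖⁻¹ • w, by simp [norm_smul, abs_of_pos (inv_pos.mpr hwnorm), inv_mul_cancel₀ (ne_of_gt hwnorm)]⟩
  obtain ⟨z₀, hz₀mem, hz₀min⟩ :=
    (isCompact_sphere (0:EuclideanSpace ℝ (Fin d)) 1).exists_isMinOn hsph hcont.continuousOn
  have hz₀ : z₀ ≠ 0 := by
    intro h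
    rw [Metric.mem_sphere, dist_zero_right, h] at hz₀mem
    simp at hz₀mem
  set c : ℝ := N z₀ with hc
  have hcpos : 0 < c := lt_of_le_of_ne (hNnonneg z₀) (fun h => hz₀ ((hNzero z₀).mp h.symm))
  have hlower : ∀ z, c * ‖z‖ ≤ N z := by
    intro z
    rcases eq_or_ne z 0 with rfl | hz
    · simp [hN0]
    · have hzn : 0 < ‖z‖ := norm_pos_iff.mpr hz
      have hmem : ‖z‖⁻¹ • z ∈ Metric.sphere (0:EuclideanSpace ℝ (Fin d)) 1 := by
        simp [norm_smul, abs_of_pos (inv_pos.mpr hzn), inv_mul_cancel₀ (ne_of_gt hzn)]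
      have h5 : N z₀ ≤ N (‖z‖⁻¹ • z) := hz₀min hmem
      rw [hNsmul, abs_of_pos (inv_pos.mpr hzn)] at h5
      rw [hc]
      calc c * ‖z‖ ≤ (‖z‖⁻¹ * N z) * ‖z‖ := by
            apply mul_le_mul_of_nonneg_right _ (le_of_lt hzn); exact h5
        _ = N z := by field_simp
  -- BddAbove
  have hbdd : BddAbove ((fun z => ⟪v, z⟫) '' {z | N z ≤ 1}) := by
    refine ⟨‖v‖ * c⁻¹, ?_⟩
    rintro x ⟨z, hz, rfl⟩
    calc ⟪v, z⟫ ≤ ‖v‖ * ‖z‖ := real_inner_le_norm v z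
      _ ≤ ‖v‖ * c⁻¹ := by
          apply mul_le_mul_of_nonneg_left _ (norm_nonneg v)
          rw [← mul_le_mul_iff_right₀ hcpos, mul_inv_cancel₀ (ne_of_gt hcpos)]
          exact le_trans (hlower z) hz
  -- element
  have hn : 0 < N w := lt_of_le_of_ne (hNnonneg w) (fun h => hw ((hNzero w).mp h.symm))
  have hmem : (N w)⁻¹ • w ∈ {z | N z ≤ 1} := by
    simp only [Set.mem_setOf_eq, hNsmul, abs_of_pos (inv_pos.mpr hn)]
    rw [inv_mul_cancel₀ (ne_of_gt hn)]
  have hle : ⟪v, (N w)⁻¹ • w⟫ ≤ dualNorm N v := le_csSup hbdd ⟨_, hmem, rfl⟩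
  rw [real_inner_smul_right] at hle
  calc ⟪v, w⟫ = ((N w)⁻¹ * ⟪v, w⟫) * N w := by field_simp
    _ ≤ dualNorm N v * N w := mul_le_mul_of_nonneg_right hle (hNnonneg w)


set_option maxHeartbeats 1000000 in
/-- Lipschitz-type bound on proximal mappings with respect to the
regularization level: if `w_α = prox_q^α(g)` and `w_β = prox_q^β(g)`, `∇r` is
`L_r`-Lipschitz (from `N` to the dual norm) and the `N`-diameter of `Z` is at most `R`,
then `N(w_α − w_β) ≤ (2 L_r R / max{α,β}) · |α − β|`. -/
theorem stmt13 {d : ℕ} (Z : Set (EuclideanSpace ℝ (Fin d)))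
    (hZne : Z.Nonempty) (hZconv : Convex ℝ Z)
    (N : EuclideanSpace ℝ (Fin d) → ℝ)
    (hNzero : ∀ x, N x = 0 ↔ x = 0)
    (hNsmul : ∀ (a : ℝ) (x : EuclideanSpace ℝ (Fin d)), N (a • x) = |a| * N x)
    (hNadd : ∀ x y, N (x + y) ≤ N x + N y)
    (r : EuclideanSpace ℝ (Fin d) → ℝ)
    (gr : EuclideanSpace ℝ (Fin d) → EuclideanSpace ℝ (Fin d))
    (hgr : ∀ z ∈ Z, HasGradientAt r (gr z) z)
    (hstrong : ∀ z ∈ Z, ∀ z' ∈ Z, 1 / 2 * N (z - z') ^ 2 ≤ breg r gr z z')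
    (Lr R : ℝ) (hLr : 0 < Lr) (hR : 0 < R)
    (hLip : ∀ z ∈ Z, ∀ z' ∈ Z, dualNorm N (gr z - gr z') ≤ Lr * N (z - z'))
    (hdiam : ∀ z ∈ Z, ∀ z' ∈ Z, N (z - z') ≤ R)
    (g : EuclideanSpace ℝ (Fin d) → EuclideanSpace ℝ (Fin d))
    (hmono : ∀ z ∈ Z, ∀ z' ∈ Z, 0 ≤ ⟪g z' - g z, z' - z⟫)
    (α β : ℝ) (hα : 0 < α) (hβ : 0 < β)
    (q : EuclideanSpace ℝ (Fin d)) (hq : q ∈ Z)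
    (wα wβ : EuclideanSpace ℝ (Fin d)) (hwα : wα ∈ Z) (hwβ : wβ ∈ Z)
    (hvarα : ∀ u ∈ Z, ⟪g wα, wα - u⟫ ≤ α * (breg r gr q u - breg r gr wα u - breg r gr q wα))
    (hvarβ : ∀ u ∈ Z, ⟪g wβ, wβ - u⟫ ≤ β * (breg r gr q u - breg r gr wβ u - breg r gr q wβ)) :
    N (wα - wβ) ≤ 2 * Lr * R / max α β * |α - β| := by
  have hN0 : N 0 = 0 := (hNzero 0).mpr rfl
  have hNneg : ∀ x, N (-x) = N x := by
    intro x; have := hNsmul (-1) x; simpa using this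
  have hNnonneg : ∀ x, 0 ≤ N x := by
    intro x
    have h := hNadd x (-x)
    rw [add_neg_cancel, hN0, hNneg] at h
    linarith
  have hmax : 0 < max α β := lt_max_of_lt_left hα
  rcases eq_or_ne wα wβ with heq | hne
  · rw [heq, sub_self, hN0]
    have h1 : 0 ≤ 2 * Lr * R / max α β := by positivity
    exact mul_nonneg h1 (abs_nonneg _)
  -- setup
  set n : ℝ := N (wα - wβ) with hn
  have hnpos : 0 < n :=
    lt_of_le_of_ne (hNnonneg _) (fun h => hne (sub_eq_zero.mp ((hNzero _).mp h.symm)))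
  set v : EuclideanSpace ℝ (Fin d) := wβ - wα with hv
  have hvne : v ≠ 0 := sub_ne_zero.mpr (Ne.symm hne)
  have hNv : N v = n := by rw [hv, hn, show wβ - wα = -(wα - wβ) by abel, hNneg]
  set γ : ℝ → EuclideanSpace ℝ (Fin d) := fun t => wα + t • v with hγ
  have hγmem : ∀ t ∈ Set.Icc (0:ℝ) 1, γ t ∈ Z := by
    intro t ht
    have hmem := hZconv hwα hwβ (by linarith [ht.2] : (0:ℝ) ≤ 1 - t) ht.1 (by ring)
    have hγt : γ t = (1 - t) • wα + t • wβ := by simp only [hγ, hv]; module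
    rw [hγt]; exact hmem
  have hγd : ∀ t : ℝ, HasDerivAt γ v t := fun t => by
    rw [hγ]; simpa only [id, id_eq, one_smul] using ((hasDerivAt_id t).smul_const v).const_add wα
  -- derivative of t ↦ breg q (γ t)
  have hexp : ∀ s : ℝ, breg r gr q (γ s) = r (γ s) - r q - (⟪gr q, wα - q⟫ + s * ⟪gr q, v⟫) := by
    intro s
    simp only [breg, hγ]
    have h : wα + s • v - q = (wα - q) + s • v := by abel
    rw [h, inner_add_right, real_inner_smul_right]
  have hderiv : ∀ t ∈ Set.Icc (0:ℝ) 1,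
      HasDerivAt (fun s => breg r gr q (γ s)) ⟪gr (γ t) - gr q, v⟫ t := by
    intro t ht
    have h1 : HasDerivAt (fun s => r (γ s)) ⟪gr (γ t), v⟫ t := by
      have := (hgr (γ t) (hγmem t ht)).hasFDerivAt.comp_hasDerivAt t (hγd t)
      simp only [Function.comp_def] at this; simp at this; exact this
    have hb : HasDerivAt (fun s : ℝ => ⟪gr q, wα - q⟫ + s * ⟪gr q, v⟫) ⟪gr q, v⟫ t :=
      (hasDerivAt_mul_const _).const_add _
    have h2 : HasDerivAt (fun s : ℝ => r (γ s) - r q - (⟪gr q, wα - q⟫ + s * ⟪gr q, v⟫))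
        (⟪gr (γ t), v⟫ - ⟪gr q, v⟫) t := (h1.sub_const (r q)).sub hb
    rw [show (⟪gr (γ t) - gr q, v⟫ : ℝ) = ⟪gr (γ t), v⟫ - ⟪gr q, v⟫ from inner_sub_left _ _ _,
      funext hexp]
    exact h2
  obtain ⟨c, hcmem, hslope⟩ := exists_hasDerivAt_eq_slope
    (fun s => breg r gr q (γ s)) (fun s => ⟪gr (γ s) - gr q, v⟫) one_pos
    (fun t ht => (hderiv t ht).continuousAt.continuousWithinAt)
    (fun t ht => hderiv t (Set.mem_Icc_of_Ioo ht))
  have hγ1 : γ 1 = wβ := by simp [hγ, hv]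
  have hγ0 : γ 0 = wα := by simp [hγ]
  rw [hγ1, hγ0] at hslope
  have hslope' : ⟪gr (γ c) - gr q, v⟫ = breg r gr q wβ - breg r gr q wα := by
    rw [hslope]; ring
  have hγc : γ c ∈ Z := hγmem c (Set.mem_Icc_of_Ioo hcmem)
  -- bound |breg q wβ - breg q wα| ≤ Lr * R * n
  have hdn1 : dualNorm N (gr (γ c) - gr q) ≤ Lr * R := by
    refine (hLip (γ c) hγc q hq).trans ?_
    exact mul_le_mul_of_nonneg_left (hdiam (γ c) hγc q hq) hLr.le
  have hdn2 : dualNorm N (gr q - gr (γ c)) ≤ Lr * R := by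
    refine (hLip q hq (γ c) hγc).trans ?_
    exact mul_le_mul_of_nonneg_left (hdiam q hq (γ c) hγc) hLr.le
  have hD : |breg r gr q wβ - breg r gr q wα| ≤ Lr * R * n := by
    rw [← hslope', abs_le]
    constructor
    · have h1 : (-⟪gr (γ c) - gr q, v⟫ : ℝ) = ⟪gr q - gr (γ c), v⟫ := by
        rw [← inner_neg_left]; congr 1; abel
      have h2 := pairing_le N hNzero hNsmul hNadd (gr q - gr (γ c)) v hvne
      rw [hNv] at h2
      have h3 := mul_le_mul_of_nonneg_right hdn2 (le_of_lt hnpos)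
      linarith [h1 ▸ h2]
    · have h2 := pairing_le N hNzero hNsmul hNadd (gr (γ c) - gr q) v hvne
      rw [hNv] at h2
      have h3 := mul_le_mul_of_nonneg_right hdn1 (le_of_lt hnpos)
      linarith
  -- algebra
  have hv1 := hvarα wβ hwβ
  have hv2 := hvarβ wα hwα
  have hm := hmono wβ hwβ wα hwα
  have hsum : ⟪g wα - g wβ, wα - wβ⟫ = ⟪g wα, wα - wβ⟫ + ⟪g wβ, wβ - wα⟫ := by
    rw [inner_sub_left, show wβ - wα = -(wα - wβ) by abel, inner_neg_right]
    ring
  have key : α * breg r gr wα wβ + β * breg r gr wβ wα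
      ≤ (α - β) * (breg r gr q wβ - breg r gr q wα) := by nlinarith [hv1, hv2, hm, hsum]
  have h1 := hstrong wα hwα wβ hwβ
  have h2 := hstrong wβ hwβ wα hwα
  have hsym : N (wβ - wα) = n := hNv ▸ congrArg N hv.symm
  rw [hsym] at h2
  rw [← hn] at h1
  have hstep : max α β * (1/2 * n^2) ≤ (α - β) * (breg r gr q wβ - breg r gr q wα) := by
    rcases max_cases α β with ⟨hm1, hm2⟩ | ⟨hm1, hm2⟩ <;> rw [hm1]
    · have ha1 := mul_le_mul_of_nonneg_left h1 hα.le
      have ha2 : 0 ≤ β * breg r gr wβ wα :=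
        mul_nonneg hβ.le (le_trans (by positivity) h2)
      linarith
    · have ha1 := mul_le_mul_of_nonneg_left h2 hβ.le
      have ha2 : 0 ≤ α * breg r gr wα wβ :=
        mul_nonneg hα.le (le_trans (by positivity) h1)
      linarith
  have hfinal : max α β * (1/2 * n^2) ≤ |α - β| * (Lr * R * n) := by
    calc max α β * (1/2 * n^2) ≤ (α - β) * (breg r gr q wβ - breg r gr q wα) := hstep
      _ ≤ |(α - β) * (breg r gr q wβ - breg r gr q wα)| := le_abs_self _
      _ = |α - β| * |breg r gr q wβ - breg r gr q wα| := abs_mul _ _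
      _ ≤ |α - β| * (Lr * R * n) := mul_le_mul_of_nonneg_left hD (abs_nonneg _)
  rw [div_mul_eq_mul_div, le_div_iff₀ hmax]
  nlinarith [hfinal, hnpos]
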